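/- A group acting on a nonempty finite tree (a finite connected acyclic graph) by graph automorphisms without inversions fixes a vertex or a geometric edge; consequently, a finite group acting without inversions on a tree fixes a vertex. -/

import Mathlib

open SimpleGraph Walk

private lemma tree_path_unique {V : Type*} {T : SimpleGraph V} (hT : T.IsTree) {a b : V}
    {p q : T.Walk a b} (hp : p.IsPath) (hq : q.IsPath) : p = q := by
  have := isAcyclic_iff_path_unique.mp hT.2 ⟨p, hp⟩ ⟨q, hq⟩
  exact congrArg Subtype.val this

private lemma tree_two_nbrs {V : Type*} {T : SimpleGraph V} {u v x : V} (p : T.Walk u v)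
    (hp : p.IsPath) (hx : x ∈ p.support) (hxu : x ≠ u) (hxv : x ≠ v) :
    ∃ n₁ n₂ : V, n₁ ≠ n₂ ∧ n₁ ∈ p.support ∧ n₂ ∈ p.support ∧ T.Adj x n₁ ∧ T.Adj x n₂ := by
  classical
  have hspec := p.take_spec hx
  obtain ⟨n₂, h₂, r₂, hq₂⟩ := Walk.exists_eq_cons_of_ne hxv (p.dropUntil x hx)
  obtain ⟨n₁, h₁, r₁, hq₁⟩ := Walk.exists_eq_cons_of_ne hxu (p.takeUntil x hx).reverse
  have hn₁mem : n₁ ∈ (p.takeUntil x hx).support := by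
    have h5 : n₁ ∈ (p.takeUntil x hx).reverse.support := by
      rw [hq₁]; simp [Walk.start_mem_support]
    rwa [Walk.support_reverse, List.mem_reverse] at h5
  have hn₂mem : n₂ ∈ (p.dropUntil x hx).support.tail := by
    rw [hq₂]
    simp [Walk.start_mem_support]
  have hnodup : (p.support).Nodup := hp.support_nodup
  rw [← hspec, Walk.support_append] at hnodup
  have hdisj := List.disjoint_of_nodup_append hnodup
  exact ⟨n₁, n₂, fun h => hdisj hn₁mem (h ▸ hn₂mem),
    p.support_takeUntil_subset hx hn₁mem,
    p.support_dropUntil_subset hx (List.tail_subset _ hn₂mem), h₁, h₂⟩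

private lemma tree_fixed_key {V Γ : Type*} [Group Γ] [MulAction Γ V]
    (T : SimpleGraph V) (hT : T.IsTree)
    (hadj : ∀ (g : Γ) (v w : V), T.Adj v w → T.Adj (g • v) (g • w))
    (hni : ∀ (g : Γ) (v w : V), T.Adj v w → ¬(g • v = w ∧ g • w = v)) :
    ∀ (n : ℕ) (S : Set V), S.Finite → S.ncard ≤ n → S.Nonempty →
    (∀ (g : Γ), ∀ x ∈ S, g • x ∈ S) →
    (∀ a b : V, a ∈ S → b ∈ S → ∀ p : T.Walk a b, p.IsPath → ∀ x ∈ p.support, x ∈ S) →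
    ∃ v ∈ S, ∀ g : Γ, g • v = v := by
  classical
  intro n
  induction n with
  | zero =>
    intro S hfin hcard hne _ _
    have := (Set.ncard_pos hfin).mpr hne
    omega
  | succ n ih =>
    intro S hfin hcard hne hinv hconv
    set S' : Set V := {u ∈ S | ∃ w₁ w₂ : V, w₁ ≠ w₂ ∧ w₁ ∈ S ∧ w₂ ∈ S ∧ T.Adj u w₁ ∧ T.Adj u w₂}
      with hS'def
    by_cases hS' : S'.Nonempty
    · -- prune a leaf and recurse
      obtain ⟨u0, hu0S, w₁, w₂, hw12, hw₁S, hw₂S, hadj₁, hadj₂⟩ := id hS'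
      -- maximal distance pair
      obtain ⟨⟨a, b⟩, habmem, hmax⟩ := Finset.exists_max_image
        (hfin.toFinset ×ˢ hfin.toFinset) (fun q => T.dist q.1 q.2)
        ⟨(u0, u0), by simp [hu0S]⟩
      simp only [Finset.mem_product, Set.Finite.mem_toFinset] at habmem
      obtain ⟨haS, hbS⟩ := habmem
      have hmax' : ∀ x y : V, x ∈ S → y ∈ S → T.dist x y ≤ T.dist a b := by
        intro x y hx hy
        exact hmax (x, y) (by simp [Set.Finite.mem_toFinset, hx, hy])
      have hdpos : 0 < T.dist a b := by
        have h1 := hT.1.pos_dist_of_ne hadj₁.ne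
        exact lt_of_lt_of_le h1 (hmax' u0 w₁ hu0S hw₁S)
      obtain ⟨P, hP, hPlen⟩ := hT.1.exists_path_of_dist a b
      -- every S-neighbor of a lies on P
      have hnbrP : ∀ x, x ∈ S → T.Adj a x → x ∈ P.support := by
        intro x hxS hax
        by_contra hxP
        have hQ : (Walk.cons hax.symm P).IsPath := by
          rw [Walk.cons_isPath_iff]; exact ⟨hP, hxP⟩
        obtain ⟨R, hR, hRlen⟩ := hT.1.exists_path_of_dist x b
        have hRQ : R = Walk.cons hax.symm P := tree_path_unique hT hR hQ
        have : T.dist x b = P.length + 1 := by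
          rw [← hRlen, hRQ]; simp
        have := hmax' x b hxS hbS
        omega
      -- every S-neighbor of a on P is the second vertex of P
      have hsec : ∀ x (hx : x ∈ P.support), T.Adj a x → x = P.getVert 1 := by
        intro x hx hax
        have ht := P.take_spec hx
        have htp : (P.takeUntil x hx).IsPath := hP.takeUntil hx
        have hedge : ((Walk.cons hax Walk.nil) : T.Walk a x).IsPath := by
          simp [hax.ne]
        have heq := tree_path_unique hT htp hedge
        rw [heq] at ht
        have := congrArg (fun w => Walk.getVert w 1) ht
        simpa using this
      have haS' : a ∉ S' := by
        rintro ⟨-, x₁, x₂, hx12, hx₁S, hx₂S, ha₁, ha₂⟩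
        exact hx12 ((hsec x₁ (hnbrP x₁ hx₁S ha₁) ha₁).trans
          (hsec x₂ (hnbrP x₂ hx₂S ha₂) ha₂).symm)
      have hsub : S' ⊆ S := fun x hx => hx.1
      have hss : S' ⊂ S := ⟨hsub, fun h => haS' (h haS)⟩
      have hcard' : S'.ncard ≤ n := by
        have := Set.ncard_lt_ncard hss hfin
        omega
      have hinv' : ∀ (g : Γ), ∀ x ∈ S', g • x ∈ S' := by
        rintro g x ⟨hxS, y₁, y₂, hy12, hy₁S, hy₂S, h₁, h₂⟩
        exact ⟨hinv g x hxS, g • y₁, g • y₂,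
          fun h => hy12 (MulAction.injective g h), hinv g y₁ hy₁S, hinv g y₂ hy₂S,
          hadj g x y₁ h₁, hadj g x y₂ h₂⟩
      have hconv' : ∀ a b : V, a ∈ S' → b ∈ S' → ∀ p : T.Walk a b, p.IsPath →
          ∀ x ∈ p.support, x ∈ S' := by
        intro c d hcS' hdS' p hp x hx
        have hxS : x ∈ S := hconv c d (hsub hcS') (hsub hdS') p hp x hx
        by_cases hxc : x = c
        · rwa [hxc]
        by_cases hxd : x = d
        · rwa [hxd]
        obtain ⟨n₁, n₂, hn12, hn₁, hn₂, hA₁, hA₂⟩ := tree_two_nbrs p hp hx hxc hxd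
        exact ⟨hxS, n₁, n₂, hn12,
          hconv c d (hsub hcS') (hsub hdS') p hp n₁ hn₁,
          hconv c d (hsub hcS') (hsub hdS') p hp n₂ hn₂, hA₁, hA₂⟩
      obtain ⟨v, hvS', hvfix⟩ := ih S' (hfin.subset hsub) hcard' hS' hinv' hconv'
      exact ⟨v, hsub hvS', hvfix⟩
    · -- no vertex of S has two distinct S-neighbors
      have hadjS : ∀ c ∈ S, ∀ d ∈ S, c ≠ d → T.Adj c d := by
        intro c hc d hd hcd
        obtain ⟨p0⟩ := hT.1.preconnected c d
        have hp : p0.bypass.IsPath := p0.bypass_isPath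
        obtain ⟨y, hy, r, hcons⟩ := Walk.exists_eq_cons_of_ne hcd p0.bypass
        have hyS : y ∈ S := hconv c d hc hd p0.bypass hp y
          (by rw [hcons]; simp [Walk.start_mem_support])
        by_cases hyd : y = d
        · rwa [hyd] at hy
        · exfalso
          have hymem : y ∈ p0.bypass.support := by
            rw [hcons]; simp [Walk.start_mem_support]
          obtain ⟨n₁, n₂, hn12, hn₁, hn₂, hA₁, hA₂⟩ :=
            tree_two_nbrs p0.bypass hp hymem hy.ne' hyd
          exact hS' ⟨y, hyS, n₁, n₂, hn12,
            hconv c d hc hd p0.bypass hp n₁ hn₁,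
            hconv c d hc hd p0.bypass hp n₂ hn₂, hA₁, hA₂⟩
      obtain ⟨a, haS⟩ := hne
      by_cases hone : ∀ c ∈ S, c = a
      · refine ⟨a, haS, fun g => hone _ (hinv g a haS)⟩
      · push_neg at hone
        obtain ⟨b, hbS, hba⟩ := hone
        have hAab : T.Adj a b := hadjS a haS b hbS hba.symm
        have hSab : ∀ c ∈ S, c = a ∨ c = b := by
          intro c hc
          by_contra hcc
          push_neg at hcc
          exact hS' ⟨a, haS, b, c, fun h => hcc.2 h.symm, hbS, hc,
            hAab, hadjS a haS c hc (fun h => hcc.1 h.symm)⟩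
        refine ⟨a, haS, fun g => ?_⟩
        rcases hSab (g • a) (hinv g a haS) with h | h
        · exact h
        · exfalso
          rcases hSab (g • b) (hinv g b hbS) with h' | h'
          · exact hni g a b hAab ⟨h, h'⟩
          · exact hba (MulAction.injective g (h.trans h'.symm) : a = b).symm

/-- A group acting without inversions on a nonempty finite tree fixes a vertex or a
geometric edge (pointwise, by absence of inversions); consequently, a finite group
acting without inversions on any tree fixes a vertex. -/
theorem stmt_2 {V Γ : Type*} [Group Γ] [MulAction Γ V]
    (T : SimpleGraph V) (hT : T.IsTree)
    (hadj : ∀ (g : Γ) (v w : V), T.Adj v w → T.Adj (g • v) (g • w))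
    (hni : ∀ (g : Γ) (v w : V), T.Adj v w → ¬(g • v = w ∧ g • w = v)) :
    ((Nonempty V ∧ Finite V) →
        ((∃ v : V, ∀ g : Γ, g • v = v) ∨
          ∃ v w : V, T.Adj v w ∧ ∀ g : Γ, g • v = v ∧ g • w = w)) ∧
      (Finite Γ → ∃ v : V, ∀ g : Γ, g • v = v) := by
  classical
  constructor
  · rintro ⟨hne, hfin⟩
    left
    obtain ⟨v, -, hv⟩ := tree_fixed_key T hT hadj hni (Set.univ : Set V).ncard Set.univ
      Set.finite_univ le_rfl (by simp [Set.univ_nonempty])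
      (fun g x _ => Set.mem_univ _) (fun a b _ _ p _ x _ => Set.mem_univ _)
    exact ⟨v, hv⟩
  · intro hΓ
    have hVne : Nonempty V := hT.1.nonempty
    obtain ⟨v0⟩ := hVne
    set S : Set V :=
      {x | ∃ g₁ g₂ : Γ, ∃ p : T.Walk (g₁ • v0) (g₂ • v0), p.IsPath ∧ x ∈ p.support}
      with hSdef
    have hScanon : ∀ x ∈ S, ∃ g₁ g₂ : Γ,
        x ∈ (hT.1.exists_path_of_dist (g₁ • v0) (g₂ • v0)).choose.support := by
      rintro x ⟨g₁, g₂, p, hp, hx⟩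
      refine ⟨g₁, g₂, ?_⟩
      have := tree_path_unique hT hp (hT.1.exists_path_of_dist (g₁ • v0) (g₂ • v0)).choose_spec.1
      rwa [this] at hx
    have hfin : S.Finite := by
      have hsub : S ⊆ ⋃ (g₁ : Γ) (g₂ : Γ),
          {x | x ∈ (hT.1.exists_path_of_dist (g₁ • v0) (g₂ • v0)).choose.support} := by
        intro x hx
        obtain ⟨g₁, g₂, h⟩ := hScanon x hx
        exact Set.mem_iUnion.2 ⟨g₁, Set.mem_iUnion.2 ⟨g₂, h⟩⟩
      exact Set.Finite.subset
        (Set.finite_iUnion fun g₁ => Set.finite_iUnion fun g₂ => List.finite_toSet _) hsub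
    have hneS : S.Nonempty := by
      refine ⟨(1 : Γ) • v0, 1, 1, Walk.nil.copy (one_smul Γ v0).symm (one_smul Γ v0).symm,
        by simp, ?_⟩
      simp
    have hinvS : ∀ (g : Γ), ∀ x ∈ S, g • x ∈ S := by
      rintro g x ⟨g₁, g₂, p, hp, hx⟩
      let φ : T →g T := ⟨fun v => g • v, fun h => hadj g _ _ h⟩
      refine ⟨g * g₁, g * g₂,
        (p.map φ).copy (mul_smul g g₁ v0).symm (mul_smul g g₂ v0).symm, ?_, ?_⟩
      · rw [Walk.isPath_copy]
        exact p.map_isPath_of_injective (MulAction.injective g) hp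
      · rw [Walk.support_copy, Walk.support_map]
        exact List.mem_map_of_mem (f := φ) hx
    have hconvS : ∀ a b : V, a ∈ S → b ∈ S → ∀ p : T.Walk a b, p.IsPath →
        ∀ x ∈ p.support, x ∈ S := by
      rintro a b ⟨g₁, g₂, p₁, hp₁, ha⟩ ⟨g₃, g₄, p₂, hp₂, hb⟩ q hq x hx
      obtain ⟨r, hr, -⟩ := hT.1.exists_path_of_dist (g₂ • v0) (g₃ • v0)
      set w : T.Walk a b := (p₁.dropUntil a ha).append (r.append (p₂.takeUntil b hb)) with hwdef
      have hqw : q = w.bypass := tree_path_unique hT hq w.bypass_isPath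
      have hx' : x ∈ w.support := w.support_bypass_subset (hqw ▸ hx)
      rw [hwdef, Walk.mem_support_append_iff] at hx'
      rcases hx' with hx' | hx'
      · exact ⟨g₁, g₂, p₁, hp₁, p₁.support_dropUntil_subset ha hx'⟩
      · rw [Walk.mem_support_append_iff] at hx'
        rcases hx' with hx' | hx'
        · exact ⟨g₂, g₃, r, hr, hx'⟩
        · exact ⟨g₃, g₄, p₂, hp₂, p₂.support_takeUntil_subset hb hx'⟩
    obtain ⟨v, -, hv⟩ := tree_fixed_key T hT hadj hni S.ncard S hfin le_rfl hneS hinvS hconvS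
    exact ⟨v, hv⟩
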